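/- There exists a constant c > 0 such that for all probability measures μ, ν on ℝᵈ, c‖μ-ν‖_{var} ≤ ‖μ-ν‖_{δ,k*}, where ‖·‖_{var} is the total variation norm. -/

import Mathlib

open MeasureTheory ENNReal

noncomputable def tildeNorm (d : ℕ) (k : ℝ≥0∞) {F : Type*} [NormedAddCommGroup F]
    (f : EuclideanSpace ℝ (Fin d) → F) : ℝ≥0∞ :=
  ⨆ z : EuclideanSpace ℝ (Fin d),
    eLpNorm ((Metric.closedBall z 1).indicator f) k volume

/-- The heat semigroup `P_t⁰ f(x) = (2πt)^{-d/2} ∫ e^{-|x-y|²/(2t)} f(y) dy` on `ℝᵈ`. -/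
noncomputable def heatSem (d : ℕ) {F : Type*} [NormedAddCommGroup F] [NormedSpace ℝ F]
    (t : ℝ) (f : EuclideanSpace ℝ (Fin d) → F) (x : EuclideanSpace ℝ (Fin d)) : F :=
  (2 * Real.pi * t) ^ (-(d : ℝ) / 2) •
    ∫ y, Real.exp (-‖x - y‖ ^ 2 / (2 * t)) • f y

/-- `(1-Δ)^{-δ/2}` via the subordination formula (identity for `δ = 0`). -/
noncomputable def bessel (d : ℕ) {F : Type*} [NormedAddCommGroup F] [NormedSpace ℝ F]
    (δ : ℝ) (f : EuclideanSpace ℝ (Fin d) → F) : EuclideanSpace ℝ (Fin d) → F :=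
  if δ = 0 then f else fun x =>
    (Real.Gamma (δ / 2))⁻¹ •
      ∫ t in Set.Ioi (0:ℝ), (t ^ (δ / 2 - 1) * Real.exp (-t)) • heatSem d t f x

/-- The local negative Sobolev norm `‖f‖_{W̃^{-δ,k}}`. -/
noncomputable def tildeSobNorm (d : ℕ) (δ : ℝ) (k : ℝ≥0∞) {F : Type*}
    [NormedAddCommGroup F] [NormedSpace ℝ F]
    (f : EuclideanSpace ℝ (Fin d) → F) : ℝ≥0∞ :=
  tildeNorm d k (bessel d δ f)

/-- `‖μ‖_{δ,k*}`, the dual norm of a measure against the `W̃^{-δ,k}` unit ball of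
bounded measurable functions. -/
noncomputable def dualNorm (d : ℕ) (δ : ℝ) (k : ℝ≥0∞)
    (μ : Measure (EuclideanSpace ℝ (Fin d))) : ℝ≥0∞ :=
  ⨆ (f : EuclideanSpace ℝ (Fin d) → ℝ) (_ : Measurable f) (_ : ∃ M, ∀ x, |f x| ≤ M)
    (_ : tildeSobNorm d δ k f ≤ 1), ENNReal.ofReal |∫ x, f x ∂μ|

/-- `‖μ-ν‖_{δ,k*}`. -/
noncomputable def dualDist (d : ℕ) (δ : ℝ) (k : ℝ≥0∞)
    (μ ν : Measure (EuclideanSpace ℝ (Fin d))) : ℝ≥0∞ :=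
  ⨆ (f : EuclideanSpace ℝ (Fin d) → ℝ) (_ : Measurable f) (_ : ∃ M, ∀ x, |f x| ≤ M)
    (_ : tildeSobNorm d δ k f ≤ 1), ENNReal.ofReal |∫ x, f x ∂μ - ∫ x, f x ∂ν|


section Aux
open Real

variable {d : ℕ}

local notation "E" => EuclideanSpace ℝ (Fin d)

lemma gauss_integrable {b : ℝ} (hb : 0 < b) :
    Integrable (fun v : E ↦ Real.exp (-b * ‖v‖ ^ 2)) := by
  have h := (GaussianFourier.integrable_cexp_neg_mul_sq_norm_add (V := E) (b := (b : ℂ))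
    (by simpa using hb) 0 0).norm
  refine h.congr (Filter.Eventually.of_forall fun v => ?_)
  have : (-(b:ℂ) * (‖v‖:ℂ) ^ 2 + 0 * (inner ℝ (0 : E) v : ℝ) : ℂ)
      = ((-b * ‖v‖ ^ 2 : ℝ) : ℂ) := by push_cast; ring
  simp only [this, Complex.norm_exp, Complex.ofReal_re]

lemma gauss_integral {b : ℝ} (hb : 0 < b) :
    ∫ v : E, Real.exp (-b * ‖v‖ ^ 2) = (π / b) ^ ((d : ℝ) / 2) := by
  rw [GaussianFourier.integral_rexp_neg_mul_sq_norm hb]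
  congr 1
  simp [finrank_euclideanSpace]

lemma heat_bound {f : E → ℝ} {c : ℝ} (hfc : ∀ x, |f x| ≤ c)
    {t : ℝ} (ht : 0 < t) (x : E) : ‖heatSem d t f x‖ ≤ c := by
  set b : ℝ := (2 * t)⁻¹ with hbdef
  have hb : 0 < b := by positivity
  have key : ∀ y : E, Real.exp (-‖x - y‖ ^ 2 / (2 * t)) = Real.exp (-b * ‖x - y‖ ^ 2) := by
    intro y; congr 1; rw [hbdef]; ring
  have hg : Integrable (fun y : E ↦ Real.exp (-b * ‖x - y‖ ^ 2) * c) :=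
    ((integrable_comp_sub_left (fun v : E => Real.exp (-b * ‖v‖ ^ 2)) x).2
      (gauss_integrable hb)).mul_const c
  have hI : ‖∫ y, Real.exp (-‖x - y‖ ^ 2 / (2 * t)) • f y‖
      ≤ ∫ y : E, Real.exp (-b * ‖x - y‖ ^ 2) * c := by
    refine norm_integral_le_of_norm_le hg (Filter.Eventually.of_forall fun y => ?_)
    rw [key, norm_smul, Real.norm_eq_abs, abs_of_pos (Real.exp_pos _)]
    exact mul_le_mul_of_nonneg_left (hfc y) (Real.exp_pos _).le
  have hval : ∫ y : E, Real.exp (-b * ‖x - y‖ ^ 2) * c = (π / b) ^ ((d : ℝ) / 2) * c := by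
    rw [MeasureTheory.integral_mul_const,
      integral_sub_left_eq_self (fun v : E => Real.exp (-b * ‖v‖ ^ 2)) volume x,
      gauss_integral hb]
  have hpb : π / b = 2 * π * t := by rw [hbdef]; field_simp
  have hr : (2 * π * t) ^ (-(d : ℝ) / 2) * (2 * π * t) ^ ((d : ℝ) / 2) = 1 := by
    rw [← Real.rpow_add (by positivity), neg_div, neg_add_cancel, Real.rpow_zero]
  have hrpos : (0:ℝ) < (2 * π * t) ^ (-(d : ℝ) / 2) := Real.rpow_pos_of_pos (by positivity) _
  calc ‖heatSem d t f x‖ = (2 * π * t) ^ (-(d : ℝ) / 2) *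
        ‖∫ y, Real.exp (-‖x - y‖ ^ 2 / (2 * t)) • f y‖ := by
        rw [heatSem, norm_smul, Real.norm_eq_abs, abs_of_pos hrpos]
    _ ≤ (2 * π * t) ^ (-(d : ℝ) / 2) * ((π / b) ^ ((d : ℝ) / 2) * c) := by
        exact mul_le_mul_of_nonneg_left (hI.trans_eq hval) hrpos.le
    _ = c := by rw [hpb, ← mul_assoc, hr, one_mul]

lemma bessel_bound {δ : ℝ} (hδ : 0 ≤ δ) {f : E → ℝ} {c : ℝ} (hc : 0 ≤ c)
    (hfc : ∀ x, |f x| ≤ c) (x : E) : ‖bessel d δ f x‖ ≤ c := by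
  rcases eq_or_lt_of_le hδ with h0 | hpos
  · rw [bessel, if_pos h0.symm]; exact hfc x
  set s : ℝ := δ / 2 with hsdef
  have hs : 0 < s := by positivity
  have hΓ : 0 < Real.Gamma s := Real.Gamma_pos_of_pos hs
  rw [bessel, if_neg hpos.ne']
  have hgint : IntegrableOn (fun t : ℝ => (t ^ (s - 1) * Real.exp (-t)) * c) (Set.Ioi 0) :=
    IntegrableOn.congr_fun ((Real.GammaIntegral_convergent hs).mul_const c)
      (fun t _ => by ring) measurableSet_Ioi
  have hJ : ‖∫ t in Set.Ioi (0:ℝ), (t ^ (δ / 2 - 1) * Real.exp (-t)) • heatSem d t f x‖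
      ≤ ∫ t in Set.Ioi (0:ℝ), (t ^ (s - 1) * Real.exp (-t)) * c := by
    refine norm_integral_le_of_norm_le hgint ?_
    filter_upwards [ae_restrict_mem measurableSet_Ioi] with t ht
    have h1 : (0:ℝ) ≤ t ^ (s - 1) * Real.exp (-t) :=
      mul_nonneg (Real.rpow_nonneg (le_of_lt ht) _) (Real.exp_pos _).le
    rw [hsdef, norm_smul, Real.norm_eq_abs, abs_of_nonneg h1]
    exact mul_le_mul_of_nonneg_left (heat_bound hfc ht x) h1
  have hgval : ∫ t in Set.Ioi (0:ℝ), (t ^ (s - 1) * Real.exp (-t)) * c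
      = Real.Gamma s * c := by
    rw [MeasureTheory.integral_mul_const]
    congr 1
    rw [Real.Gamma_eq_integral hs]
    exact setIntegral_congr_fun measurableSet_Ioi fun t _ => mul_comm _ _
  calc ‖(Real.Gamma (δ / 2))⁻¹ •
        ∫ t in Set.Ioi (0:ℝ), (t ^ (δ / 2 - 1) * Real.exp (-t)) • heatSem d t f x‖
      = (Real.Gamma s)⁻¹ *
        ‖∫ t in Set.Ioi (0:ℝ), (t ^ (δ / 2 - 1) * Real.exp (-t)) • heatSem d t f x‖ := by
        rw [norm_smul, Real.norm_eq_abs, abs_of_pos (inv_pos.2 hΓ)]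
    _ ≤ (Real.Gamma s)⁻¹ * (Real.Gamma s * c) :=
        mul_le_mul_of_nonneg_left (hJ.trans_eq hgval) (inv_pos.2 hΓ).le
    _ = c := by field_simp

lemma tildeNorm_le {g : E → ℝ} {c : ℝ} (hc : 0 ≤ c) (hg : ∀ x, ‖g x‖ ≤ c)
    {k : ℝ≥0∞} (hk : 1 ≤ k) :
    tildeNorm d k g ≤ ENNReal.ofReal c * max (volume (Metric.closedBall (0:E) 1)) 1 := by
  have hk0 : k ≠ 0 := (zero_lt_one.trans_le hk).ne'
  set K : ℝ≥0∞ := max (volume (Metric.closedBall (0:E) 1)) 1 with hK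
  have hK1 : 1 ≤ K := le_max_right _ _
  refine iSup_le fun z => ?_
  have hmono : eLpNorm ((Metric.closedBall z 1).indicator g) k volume
      ≤ eLpNorm ((Metric.closedBall z 1).indicator (fun _ => c)) k volume := by
    refine eLpNorm_mono fun x => ?_
    by_cases hx : x ∈ Metric.closedBall z 1
    · simp only [Set.indicator_of_mem hx]
      simpa [Real.norm_eq_abs, abs_of_nonneg hc] using hg x
    · simp [Set.indicator_of_notMem hx]
  refine hmono.trans ?_
  rcases eq_or_ne k ∞ with hktop | hktop
  · rw [hktop, eLpNorm_exponent_top]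
    refine le_trans (eLpNormEssSup_le_of_ae_bound (C := c)
      (Filter.Eventually.of_forall fun x => ?_)) ?_
    · by_cases hx : x ∈ Metric.closedBall z 1
      · simp [Set.indicator_of_mem hx, Real.norm_eq_abs, abs_of_nonneg hc]
      · simp [Set.indicator_of_notMem hx, hc]
    · calc ENNReal.ofReal c = ENNReal.ofReal c * 1 := (mul_one _).symm
        _ ≤ ENNReal.ofReal c * K := mul_le_mul_right hK1 _
  · rw [eLpNorm_indicator_const measurableSet_closedBall hk0 hktop]
    have hball : volume (Metric.closedBall z 1) = volume (Metric.closedBall (0:E) 1) :=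
      Measure.addHaar_closedBall_center volume z 1
    have hcn : ‖c‖ₑ = ENNReal.ofReal c := by
      rw [← ofReal_norm, Real.norm_eq_abs, abs_of_nonneg hc]
    rw [hball, hcn]
    refine mul_le_mul_right ?_ _
    have hkr : 1 ≤ k.toReal := by
      have := ENNReal.toReal_mono hktop hk
      simpa using this
    have ha0 : 0 ≤ 1 / k.toReal := by positivity
    have ha1 : 1 / k.toReal ≤ 1 := by
      rw [div_le_one (by linarith)]; linarith
    set V : ℝ≥0∞ := volume (Metric.closedBall (0:E) 1)
    rcases le_total V 1 with hV | hV
    · exact le_trans (ENNReal.rpow_le_one hV ha0) hK1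
    · calc V ^ (1 / k.toReal) ≤ V ^ (1:ℝ) :=
            ENNReal.rpow_le_rpow_of_exponent_le hV ha1
        _ = V := ENNReal.rpow_one V
        _ ≤ K := le_max_left _ _

end Aux

/-- There is `c > 0` with `c ‖μ-ν‖_var ≤ ‖μ-ν‖_{δ,k*}` for all probability measures. -/
theorem stmt7 (d : ℕ) (δ : ℝ) (hδ : 0 ≤ δ) (k : ℝ≥0∞) (hk : 1 ≤ k) :
    ∃ c : ℝ, 0 < c ∧ ∀ μ ν : Measure (EuclideanSpace ℝ (Fin d)),
      IsProbabilityMeasure μ → IsProbabilityMeasure ν →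
      ENNReal.ofReal c *
        (⨆ (A : Set (EuclideanSpace ℝ (Fin d))) (_ : MeasurableSet A),
          ENNReal.ofReal |(μ A).toReal - (ν A).toReal|) ≤
        dualDist d δ k μ ν := by
  classical
  set V : ℝ≥0∞ := volume (Metric.closedBall (0 : EuclideanSpace ℝ (Fin d)) 1) with hV
  have hVlt : V < ⊤ := measure_closedBall_lt_top
  set K : ℝ≥0∞ := max V 1 with hK
  have hK1 : 1 ≤ K := le_max_right _ _
  have hKlt : K < ⊤ := max_lt hVlt ENNReal.one_lt_top
  set r : ℝ := K.toReal with hr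
  have hr1 : 1 ≤ r := by
    have := ENNReal.toReal_mono hKlt.ne hK1
    simpa using this
  have hrpos : 0 < r := lt_of_lt_of_le one_pos hr1
  refine ⟨r⁻¹, inv_pos.2 hrpos, fun μ ν hμ hν => ?_⟩
  set c : ℝ := r⁻¹ with hcdef
  have hcpos : 0 < c := inv_pos.2 hrpos
  rw [ENNReal.mul_iSup]
  refine iSup_le fun A => ?_
  rw [ENNReal.mul_iSup]
  refine iSup_le fun hA => ?_
  set f : EuclideanSpace ℝ (Fin d) → ℝ := A.indicator fun _ => c with hf
  have hmf : Measurable f := measurable_const.indicator hA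
  have hfc : ∀ x, |f x| ≤ c := by
    intro x
    by_cases hx : x ∈ A
    · simp [hf, Set.indicator_of_mem hx, abs_of_nonneg hcpos.le]
    · simp [hf, Set.indicator_of_notMem hx, hcpos.le]
  have hbb : ∀ x, ‖bessel d δ f x‖ ≤ c := bessel_bound hδ hcpos.le hfc
  have hsob : tildeSobNorm d δ k f ≤ 1 := by
    refine le_trans (tildeNorm_le hcpos.le hbb hk) ?_
    have hKr : (K : ℝ≥0∞) = ENNReal.ofReal r := (ENNReal.ofReal_toReal hKlt.ne).symm
    rw [← hV, ← hK, hKr, ← ENNReal.ofReal_mul (by positivity), hcdef,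
      inv_mul_cancel₀ hrpos.ne']
    simp
  have hintμ : ∫ x, f x ∂μ = (μ A).toReal * c := by
    rw [hf, integral_indicator_const _ hA, smul_eq_mul]; rfl
  have hintν : ∫ x, f x ∂ν = (ν A).toReal * c := by
    rw [hf, integral_indicator_const _ hA, smul_eq_mul]; rfl
  have key : ENNReal.ofReal c * ENNReal.ofReal |(μ A).toReal - (ν A).toReal|
      = ENNReal.ofReal |∫ x, f x ∂μ - ∫ x, f x ∂ν| := by
    rw [← ENNReal.ofReal_mul hcpos.le]
    congr 1
    rw [hintμ, hintν,
      show (μ A).toReal * c - (ν A).toReal * c = ((μ A).toReal - (ν A).toReal) * c by ring,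
      abs_mul, abs_of_nonneg hcpos.le, mul_comm]
  rw [key]
  exact le_iSup_of_le f (le_iSup_of_le hmf (le_iSup_of_le ⟨c, hfc⟩
    (le_iSup_of_le hsob le_rfl)))
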